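/- Suppose m = n, n ≥ 4 and η < 1/(n+1). Let μ be the uniform probability measure (n-dimensional Lebesgue measure) on [0,1]^n, and let E_disagreement be the set of initial vectors x(0) ∈ [0,1]^n for which every limit B_i = lim_{t→∞} x_i(t) exists and the limits B_1, …, B_n are pairwise distinct. Then 0 < μ(E_disagreement) < 1. -/

import Mathlib

open Filter MeasureTheory
open ENNReal

/-- Average of a vector of `n` opinions. -/
noncomputable def cliqueAvg (n : ℕ) (x : Fin n → ℝ) : ℝ := (∑ j, x j) / (n : ℝ)

/-- Full-clique (`m = n`) bounded-confidence opinion dynamics with mixing parameter `δ`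
and confidence level `η`, started from `x0`. -/
noncomputable def fcTraj (n : ℕ) (δ η : ℝ) (x0 : Fin n → ℝ) : ℕ → Fin n → ℝ
  | 0 => x0
  | t + 1 => fun i =>
      if |fcTraj n δ η x0 t i - cliqueAvg n (fcTraj n δ η x0 t)| ≤ η then
        (1 - δ) * fcTraj n δ η x0 t i + δ * cliqueAvg n (fcTraj n δ η x0 t)
      else fcTraj n δ η x0 t i
lemma fcTraj_frozen (n : ℕ) (δ η : ℝ) (x0 : Fin n → ℝ)
    (h : ∀ i, η < |x0 i - cliqueAvg n x0|) : ∀ t, fcTraj n δ η x0 t = x0 := by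
  intro t
  induction t with
  | zero => rfl
  | succ t ih =>
    funext i
    simp only [fcTraj, ih]
    rw [if_neg (not_le.2 (h i))]

lemma fcTraj_contract (n : ℕ) (hn : 0 < n) (δ η : ℝ) (hδ0 : 0 < δ) (hδ1 : δ < 1)
    (hη0 : 0 ≤ η) (x0 : Fin n → ℝ) (hx : ∀ i, x0 i ∈ Set.Icc (0:ℝ) η) :
    ∀ t i, fcTraj n δ η x0 t i
      = cliqueAvg n x0 + (1-δ)^t * (x0 i - cliqueAvg n x0) := by
  set a := cliqueAvg n x0 with ha
  have hnR : (0:ℝ) < n := by exact_mod_cast hn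
  have hsum : ∑ j, x0 j = (n:ℝ) * a := by
    rw [ha, cliqueAvg]; field_simp
  have ha0 : 0 ≤ a := by
    rw [ha, cliqueAvg]
    apply div_nonneg _ hnR.le
    exact Finset.sum_nonneg fun i _ => (hx i).1
  have haη : a ≤ η := by
    rw [ha, cliqueAvg]
    rw [div_le_iff₀ hnR]
    calc ∑ j, x0 j ≤ ∑ _j : Fin n, η := Finset.sum_le_sum fun i _ => (hx i).2
    _ = η * n := by simp [Finset.card_univ, mul_comm]
  have hd : ∀ i, |x0 i - a| ≤ η := by
    intro i
    rw [abs_le]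
    exact ⟨by linarith [(hx i).1, (hx i).2, ha0, haη], by linarith [(hx i).1, (hx i).2, ha0, haη]⟩
  intro t
  induction t with
  | zero => intro i; simp [fcTraj]
  | succ t ih =>
    have hft : fcTraj n δ η x0 t = fun i => a + (1-δ)^t * (x0 i - a) := funext ih
    have hc0 : (0:ℝ) ≤ (1-δ)^t := pow_nonneg (by linarith) t
    have hc1 : (1-δ)^t ≤ 1 := pow_le_one₀ (by linarith) (by linarith)
    have havg : cliqueAvg n (fcTraj n δ η x0 t) = a := by
      rw [hft, cliqueAvg]
      rw [Finset.sum_add_distrib, ← Finset.mul_sum, Finset.sum_sub_distrib, hsum]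
      simp [Finset.card_univ, nsmul_eq_mul]
      field_simp
    intro i
    have hcond : |fcTraj n δ η x0 t i - cliqueAvg n (fcTraj n δ η x0 t)| ≤ η := by
      rw [havg, ih i]
      have : a + (1-δ)^t * (x0 i - a) - a = (1-δ)^t * (x0 i - a) := by ring
      rw [this, abs_mul, abs_of_nonneg hc0]
      calc (1-δ)^t * |x0 i - a| ≤ 1 * η :=
        mul_le_mul hc1 (hd i) (abs_nonneg _) one_pos.le
      _ = η := one_mul η
    show (if _ then _ else _) = _
    rw [if_pos hcond, havg, ih i, pow_succ]
    ring


set_option maxHeartbeats 2000000 in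
/-- for `m = n`, `n ≥ 4`, `η < 1/(n+1)`, the disagreement-clustering event
(all limits exist and are pairwise distinct) has probability strictly between 0 and 1
under the uniform measure on `[0,1]^n`. -/
theorem stmt2 (n : ℕ) (hn : 4 ≤ n) (δ η : ℝ) (hδ0 : 0 < δ) (hδ1 : δ < 1) (hη0 : 0 < η)
    (hη : η < 1 / ((n : ℝ) + 1)) :
    0 < ((volume : Measure (Fin n → ℝ)).restrict (Set.univ.pi fun _ => Set.Icc (0:ℝ) 1))
        {x0 | ∃ B : Fin n → ℝ, Function.Injective B ∧
          ∀ i : Fin n, Tendsto (fun t => fcTraj n δ η x0 t i) atTop (nhds (B i))} ∧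
      ((volume : Measure (Fin n → ℝ)).restrict (Set.univ.pi fun _ => Set.Icc (0:ℝ) 1))
        {x0 | ∃ B : Fin n → ℝ, Function.Injective B ∧
          ∀ i : Fin n, Tendsto (fun t => fcTraj n δ η x0 t i) atTop (nhds (B i))} < 1 := by
  set C := Set.univ.pi fun _ : Fin n => Set.Icc (0:ℝ) 1 with hC
  set E := {x0 : Fin n → ℝ | ∃ B : Fin n → ℝ, Function.Injective B ∧
          ∀ i : Fin n, Tendsto (fun t => fcTraj n δ η x0 t i) atTop (nhds (B i))} with hE
  have hnR : (4:ℝ) ≤ (n:ℝ) := by exact_mod_cast hn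
  have hnpos : (0:ℝ) < n := by linarith
  have hn1 : (0:ℝ) < (n:ℝ)+1 := by linarith
  have hη5 : η < 1/5 := lt_of_lt_of_le hη (by
    rw [div_le_div_iff₀ hn1 (by norm_num)]; linarith)
  set ε : ℝ := 1/(2*((n:ℝ)+1)) with hεdef
  set ε' : ℝ := 1/(2*(n:ℝ)*((n:ℝ)+1)) with hε'def
  set σ : ℝ := ε'/(n:ℝ) with hσdef
  have hεpos : 0 < ε := by rw [hεdef]; positivity
  have hε'pos : 0 < ε' := by rw [hε'def]; positivity
  have hσpos : 0 < σ := by rw [hσdef]; positivity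
  have hε10 : ε ≤ 1/10 := by
    rw [hεdef, div_le_div_iff₀ (by linarith) (by norm_num)]; linarith
  have hε'40 : ε' ≤ 1/40 := by
    rw [hε'def, div_le_div_iff₀ (by nlinarith) (by norm_num)]; nlinarith
  have hnσ : (n:ℝ) * σ = ε' := by rw [hσdef]; field_simp
  set last : Fin n := ⟨n-1, by omega⟩ with hlast
  set I : Fin n → Set ℝ := fun i =>
    if i = last then Set.Ioo (1-ε) 1
    else Set.Ioo ((i:ℝ)*σ) ((i:ℝ)*σ + σ/2) with hI
  set S := Set.univ.pi I with hS
  -- coordinate bounds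
  have hxlow : ∀ x ∈ S, ∀ i, i ≠ last → (0:ℝ) ≤ x i ∧ x i < ε' := by
    intro x hx i hi
    have hxi := hx i (Set.mem_univ i)
    rw [hI] at hxi
    simp only [hi, if_false] at hxi
    have hiv : ((i:ℕ):ℝ) ≤ (n:ℝ) - 1 := by
      have := i.isLt; have : (i:ℕ) ≤ n - 1 := by omega
      have h2 : ((i:ℕ):ℝ) ≤ ((n-1:ℕ):ℝ) := by exact_mod_cast this
      have h3 : ((n-1:ℕ):ℝ) = (n:ℝ) - 1 := by
        have h4 : 1 ≤ n := by omega
        rw [Nat.cast_sub h4, Nat.cast_one]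
      linarith
    constructor
    · have h0 : (0:ℝ) ≤ (i:ℕ) * σ := by positivity
      linarith [hxi.1]
    · have : ((i:ℕ):ℝ) * σ + σ/2 ≤ ((n:ℝ)-1) * σ + σ/2 := by nlinarith
      have h2 : ((n:ℝ)-1) * σ + σ/2 < (n:ℝ)*σ := by nlinarith
      linarith [hxi.2, hnσ]
  have hxhigh : ∀ x ∈ S, 1 - ε < x last ∧ x last < 1 := by
    intro x hx
    have hxi := hx last (Set.mem_univ last)
    rw [hI] at hxi
    simp only [if_pos rfl] at hxi
    exact ⟨hxi.1, hxi.2⟩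
  -- sum bounds
  have hxnonneg : ∀ x ∈ S, ∀ i, (0:ℝ) ≤ x i := by
    intro x hx i
    by_cases hi : i = last
    · subst hi; linarith [(hxhigh x hx).1, hε10]
    · exact (hxlow x hx i hi).1
  have hsumlb : ∀ x ∈ S, 1 - ε ≤ ∑ j, x j := by
    intro x hx
    calc 1 - ε ≤ x last := (hxhigh x hx).1.le
    _ ≤ ∑ j, x j :=
      Finset.single_le_sum (fun i _ => hxnonneg x hx i) (Finset.mem_univ last)
  have hsumub : ∀ x ∈ S, ∑ j, x j ≤ 1 + (n:ℝ)*ε' := by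
    intro x hx
    have step1 : ∑ j, x j ≤ ∑ j : Fin n, (ε' + if j = last then (1:ℝ) else 0) := by
      apply Finset.sum_le_sum
      intro i _
      by_cases hi : i = last
      · simp only [hi, if_pos rfl, eq_self_iff_true, if_true]
        linarith [(hxhigh x hx).2, hε'pos]
      · simp only [hi, if_false]
        linarith [(hxlow x hx i hi).2]
    calc ∑ j, x j ≤ ∑ j : Fin n, (ε' + if j = last then (1:ℝ) else 0) := step1
    _ = 1 + (n:ℝ)*ε' := by
        rw [Finset.sum_add_distrib, Finset.sum_const, Finset.card_univ,
          Finset.sum_ite_eq' Finset.univ last (fun _ => (1:ℝ))]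
        simp [nsmul_eq_mul]
        ring
  have havglb : ∀ x ∈ S, (1-ε)/(n:ℝ) ≤ cliqueAvg n x := by
    intro x hx
    rw [cliqueAvg]
    gcongr
    exact hsumlb x hx
  have havgub : ∀ x ∈ S, cliqueAvg n x ≤ 1/(n:ℝ) + ε' := by
    intro x hx
    rw [cliqueAvg]
    rw [div_le_iff₀ hnpos]
    calc ∑ j, x j ≤ 1 + (n:ℝ)*ε' := hsumub x hx
    _ = (1/(n:ℝ) + ε') * (n:ℝ) := by field_simp
  -- the gap fact: nobody is within η of the average
  have hgap : ∀ x ∈ S, ∀ i, η < |x i - cliqueAvg n x| := by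
    intro x hx i
    by_cases hi : i = last
    · rw [hi]
      have h1 := (hxhigh x hx).1
      have h2 := havgub x hx
      have hninv : 1/(n:ℝ) ≤ 1/4 := by
        rw [div_le_div_iff₀ hnpos (by norm_num)]; linarith
      have hgt : η < x last - cliqueAvg n x := by
        linarith [hη5, hε10, hε'40]
      exact lt_of_lt_of_le hgt (le_abs_self _)
    · have key : (1-ε)/(n:ℝ) - ε' = 1/((n:ℝ)+1) := by
        rw [hεdef, hε'def]; field_simp; ring
      have h1 := havglb x hx
      have h2 := (hxlow x hx i hi).2
      have : η < cliqueAvg n x - x i := by linarith [hη]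
      calc η < cliqueAvg n x - x i := this
      _ = -(x i - cliqueAvg n x) := by ring
      _ ≤ |x i - cliqueAvg n x| := neg_le_abs _
  -- injectivity of coordinates on S
  have hinj : ∀ x ∈ S, Function.Injective x := by
    intro x hx
    have hmono : ∀ i j : Fin n, (i:ℕ) < (j:ℕ) → x i < x j := by
      intro i j hij
      by_cases hj : j = last
      · have hi : i ≠ last := by
          intro h
          rw [h, hj] at hij
          exact lt_irrefl _ hij
        have := (hxlow x hx i hi).2
        have := (hxhigh x hx).1
        rw [hj]
        linarith [hε'40, hε10]
      · have hi : i ≠ last := by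
          intro h
          have h1 : (i:ℕ) = n - 1 := by rw [h]
          have := j.isLt
          omega
        have hxi := hx i (Set.mem_univ i)
        have hxj := hx j (Set.mem_univ j)
        rw [hI] at hxi hxj
        simp only [hi, hj, if_false] at hxi hxj
        have hij1 : ((i:ℕ):ℝ) + 1 ≤ ((j:ℕ):ℝ) := by exact_mod_cast hij
        have : ((i:ℕ):ℝ)*σ + σ/2 < ((j:ℕ):ℝ)*σ := by nlinarith
        linarith [hxi.2, hxj.1]
    intro i j hxy
    by_contra hne
    have hvne : (i:ℕ) ≠ (j:ℕ) := fun h => hne (Fin.ext h)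
    rcases lt_or_gt_of_ne hvne with h | h
    · exact absurd hxy (ne_of_lt (hmono i j h))
    · exact absurd hxy.symm (ne_of_lt (hmono j i h))
  -- S is contained in the event E
  have hSE : S ⊆ E := by
    intro x hx
    refine ⟨x, hinj x hx, fun i => ?_⟩
    have hfr := fcTraj_frozen n δ η x (hgap x hx)
    have heq : (fun t => fcTraj n δ η x t i) = fun _ => x i :=
      funext fun t => by rw [hfr t]
    rw [heq]
    exact tendsto_const_nhds
  -- S is contained in the cube
  have hSC : S ⊆ C := by
    intro x hx i _
    simp only [Set.mem_Icc]
    constructor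
    · exact hxnonneg x hx i
    · by_cases hi : i = last
      · subst hi; linarith [(hxhigh x hx).2]
      · linarith [(hxlow x hx i hi).2, hε'40]
  have hCm : MeasurableSet C := MeasurableSet.univ_pi fun _ => measurableSet_Icc
  have hSpos : (0:ℝ≥0∞) < volume S := by
    rw [hS, volume_pi_pi]
    refine CanonicallyOrderedAdd.prod_pos.mpr fun i _ => ?_
    by_cases hi : i = last
    · have hIi : I i = Set.Ioo (1-ε) 1 := by rw [hI]; simp [hi]
      rw [hIi, Real.volume_Ioo, ENNReal.ofReal_pos]
      linarith
    · have hIi : I i = Set.Ioo (((i:ℕ):ℝ)*σ) (((i:ℕ):ℝ)*σ + σ/2) := by rw [hI]; simp [hi]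
      rw [hIi, Real.volume_Ioo, ENNReal.ofReal_pos]
      linarith
  -- lower bound
  have hlower : 0 < (volume.restrict C) E := by
    calc (0:ℝ≥0∞) < volume S := hSpos
    _ = volume (S ∩ C) := by rw [Set.inter_eq_left.mpr hSC]
    _ ≤ volume (E ∩ C) := measure_mono (Set.inter_subset_inter_left _ hSE)
    _ = (volume.restrict C) E := (Measure.restrict_apply' hCm).symm
  -- upper bound
  set T := Set.univ.pi fun _ : Fin n => Set.Icc (0:ℝ) η with hT
  have hη1 : η ≤ 1 := by linarith [hη5]
  have hTC : T ⊆ C := by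
    intro x hx i _
    have := hx i (Set.mem_univ i)
    simp only [Set.mem_Icc] at this ⊢
    exact ⟨this.1, this.2.trans hη1⟩
  have hTm : MeasurableSet T := MeasurableSet.univ_pi fun _ => measurableSet_Icc
  haveI : NeZero n := ⟨by omega⟩
  have hET : ∀ x ∈ T, x ∉ E := by
    intro x hxT hxE
    obtain ⟨B, hBinj, hBt⟩ := hxE
    have hxIcc : ∀ i, x i ∈ Set.Icc (0:ℝ) η := fun i => hxT i (Set.mem_univ i)
    have hcon := fcTraj_contract n (by omega) δ η hδ0 hδ1 hη0.le x hxIcc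
    have htend : ∀ i, Tendsto (fun t => fcTraj n δ η x t i) atTop (nhds (cliqueAvg n x)) := by
      intro i
      have h1 : Tendsto (fun t : ℕ => (1-δ)^t) atTop (nhds 0) :=
        tendsto_pow_atTop_nhds_zero_of_lt_one (by linarith) (by linarith)
      have h2 := (h1.mul_const (x i - cliqueAvg n x)).const_add (cliqueAvg n x)
      have heq : (fun t => fcTraj n δ η x t i)
          = fun t => cliqueAvg n x + (1-δ)^t * (x i - cliqueAvg n x) :=
        funext fun t => hcon t i
      rw [heq]
      simpa using h2
    have hBa : ∀ i, B i = cliqueAvg n x := fun i => tendsto_nhds_unique (hBt i) (htend i)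
    have h01 : (0 : Fin n) ≠ 1 := by
      intro h
      have := congrArg Fin.val h
      simp [Fin.val_zero, Fin.val_one'] at this
      omega
    exact h01 (hBinj ((hBa 0).trans (hBa 1).symm))
  have hvolC : volume C = 1 := by
    rw [hC, volume_pi_pi]
    simp [Real.volume_Icc]
  have hvolT : (0:ℝ≥0∞) < volume T := by
    rw [hT, volume_pi_pi]
    refine CanonicallyOrderedAdd.prod_pos.mpr fun i _ => ?_
    rw [Real.volume_Icc, ENNReal.ofReal_pos]
    linarith
  have hvolT_ne_top : volume T ≠ ⊤ := by
    refine ne_of_lt (lt_of_le_of_lt (measure_mono hTC) ?_)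
    rw [hvolC]
    exact ENNReal.one_lt_top
  have hupper : (volume.restrict C) E < 1 := by
    calc (volume.restrict C) E = volume (E ∩ C) := Measure.restrict_apply' hCm
    _ ≤ volume (C \ T) := by
        apply measure_mono
        intro x hx
        exact ⟨hx.2, fun hxT => hET x hxT hx.1⟩
    _ = volume C - volume T := measure_diff hTC hTm.nullMeasurableSet hvolT_ne_top
    _ = 1 - volume T := by rw [hvolC]
    _ < 1 := ENNReal.sub_lt_self ENNReal.one_ne_top one_ne_zero (ne_of_gt hvolT)
  exact ⟨hlower, hupper⟩
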